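/- For positive integers a₁,…,a_n, a subset partition S, N∖S with Σ_{j∈S} a_j = Σ_{j∈N∖S} a_j exists if and only if the median of the multiset {Σ_{j∈H} a_j : H ⊆ N} (with 2^n elements, both median values) equals (1/2)·Σ_{j∈N} a_j. Here the key fact is: for every H ⊆ N, either Σ_{j∈H} a_j ≤ (1/2)Σ_{j∈N} a_j ≤ Σ_{j∈N∖H} a_j or the reverse inequalities hold, and Σ_{j∈H} a_j + Σ_{j∈N∖H} a_j = Σ_{j∈N} a_j. -/

import Mathlib

open Finset

lemma sorted_getElem_iff (L : List ℝ) (hL : L.Pairwise (· ≤ ·)) (p : ℝ → Prop) [DecidablePred p]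
    (hp : ∀ y z : ℝ, y ≤ z → p z → p y) (i : ℕ) (hi : i < L.length) :
    p L[i] ↔ i < (L.filter (fun y => p y)).length := by
  have hmono : ∀ (j k : ℕ) (hj : j < L.length) (hk : k < L.length), j ≤ k → L[j] ≤ L[k] := by
    intro j k hj hk hjk
    rcases eq_or_lt_of_le hjk with h | h
    · subst h; rfl
    · exact (List.pairwise_iff_getElem.mp hL) j k hj hk h
  constructor
  · intro hpi
    have htake : (L.take (i+1)).filter (fun y => p y) = L.take (i+1) := by
      rw [List.filter_eq_self]
      intro a ha
      rw [List.mem_iff_getElem] at ha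
      obtain ⟨j, hj, rfl⟩ := ha
      rw [List.getElem_take]
      have hj' : j < i + 1 := lt_of_lt_of_le hj (by simp [List.length_take])
      simp only [decide_eq_true_eq]
      exact hp _ _ (hmono j i (by omega) hi (by omega)) hpi
    calc i < (L.take (i+1)).length := by simp [List.length_take]; omega
    _ = ((L.take (i+1)).filter (fun y => p y)).length := by rw [htake]
    _ ≤ (L.filter (fun y => p y)).length := by
        conv_rhs => rw [← List.take_append_drop (i+1) L]
        rw [List.filter_append, List.length_append]; omega
  · intro hcnt
    by_contra hpi
    have hdrop : (L.drop i).filter (fun y => p y) = [] := by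
      rw [List.filter_eq_nil_iff]
      intro a ha
      rw [List.mem_iff_getElem] at ha
      obtain ⟨j, hj, rfl⟩ := ha
      rw [List.getElem_drop]
      simp only [decide_eq_true_eq]
      intro hpj
      exact hpi (hp _ _ (hmono i (i+j) hi (by simp [List.length_drop] at hj; omega) (by omega)) hpj)
    have : (L.filter (fun y => p y)).length ≤ i := by
      conv_lhs => rw [← List.take_append_drop i L]
      rw [List.filter_append, hdrop, List.length_append]
      simp [List.length_take]
      exact (List.length_filter_le _ _).trans (by simp [List.length_take])
    omega

theorem partition_iff_median (n : ℕ) (hn : 1 ≤ n) (a : Fin n → ℕ) (ha : ∀ j, 0 < a j) :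
    (∀ H : Finset (Fin n),
      ((∑ j ∈ H, (a j : ℝ)) ≤ (∑ j, (a j : ℝ)) / 2 ∧
        (∑ j, (a j : ℝ)) / 2 ≤ ∑ j ∈ Hᶜ, (a j : ℝ)) ∨
      ((∑ j ∈ Hᶜ, (a j : ℝ)) ≤ (∑ j, (a j : ℝ)) / 2 ∧
        (∑ j, (a j : ℝ)) / 2 ≤ ∑ j ∈ H, (a j : ℝ)))
    ∧
    (∀ H : Finset (Fin n),
      (∑ j ∈ H, (a j : ℝ)) + ∑ j ∈ Hᶜ, (a j : ℝ) = ∑ j, (a j : ℝ))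
    ∧
    ((∃ S : Finset (Fin n), ∑ j ∈ S, a j = ∑ j ∈ Sᶜ, a j) ↔
      ((((Finset.univ : Finset (Finset (Fin n))).val.map
            (fun H => ∑ j ∈ H, (a j : ℝ))).sort (· ≤ ·))[2 ^ (n - 1) - 1]?
          = some ((∑ j, (a j : ℝ)) / 2) ∧
        (((Finset.univ : Finset (Finset (Fin n))).val.map
            (fun H => ∑ j ∈ H, (a j : ℝ))).sort (· ≤ ·))[2 ^ (n - 1)]?
          = some ((∑ j, (a j : ℝ)) / 2))) := by
  set T : ℝ := ∑ j, (a j : ℝ) with hT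
  set g : Finset (Fin n) → ℝ := fun H => ∑ j ∈ H, (a j : ℝ) with hg
  have part2 : ∀ H : Finset (Fin n), g H + g Hᶜ = T := fun H => Finset.sum_add_sum_compl H _
  refine ⟨fun H => ?_, part2, ?_⟩
  · rcases le_or_gt (g H) (T/2) with h | h
    · left; exact ⟨h, by have := part2 H; linarith⟩
    · right; exact ⟨by have := part2 H; linarith, le_of_lt h⟩
  -- part 3
  set M : Multiset ℝ := (Finset.univ : Finset (Finset (Fin n))).val.map g with hM
  set L : List ℝ := M.sort (· ≤ ·) with hLdef
  have hL : L.Pairwise (· ≤ ·) := Multiset.pairwise_sort _ _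
  have hcard : Multiset.card M = 2 ^ n := by
    rw [hM, Multiset.card_map]
    simpa using Fintype.card_finset (α := Fin n)
  have hlen : L.length = 2 ^ n := by rw [hLdef, Multiset.length_sort, hcard]
  set m : ℕ := (Finset.univ.filter (fun H : Finset (Fin n) => g H < T/2)).card with hm
  set e : ℕ := (Finset.univ.filter (fun H : Finset (Fin n) => g H = T/2)).card with he
  -- filter of L for a predicate p corresponds to Finset filter
  have hcount : ∀ (p : ℝ → Prop) [DecidablePred p],
      (L.filter (fun y => p y)).length
        = (Finset.univ.filter (fun H : Finset (Fin n) => p (g H))).card := by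
    intro p hp
    have h1 : (↑(L.filter (fun y => p y)) : Multiset ℝ) = M.filter p := by
      rw [← Multiset.sort_eq M (· ≤ ·), ← hLdef, Multiset.filter_coe]
    have h2 : (L.filter (fun y => p y)).length
        = Multiset.card (M.filter p) := by
      rw [← h1]; simp
    rw [h2, hM, ← Multiset.countP_eq_card_filter, Multiset.countP_map]
    rfl
  have hcompl : (Finset.univ.filter (fun H : Finset (Fin n) => T/2 < g H)).card = m := by
    rw [hm]
    refine Finset.card_bij' (fun H _ => Hᶜ) (fun H _ => Hᶜ) ?_ ?_ ?_ ?_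
    · intro H hH
      rw [Finset.mem_filter] at hH ⊢
      refine ⟨Finset.mem_univ _, ?_⟩
      have := part2 H; linarith [hH.2]
    · intro H hH
      rw [Finset.mem_filter] at hH ⊢
      refine ⟨Finset.mem_univ _, ?_⟩
      have := part2 H; linarith [hH.2]
    · intro H _; simp
    · intro H _; simp
  have hle_card : (Finset.univ.filter (fun H : Finset (Fin n) => g H ≤ T/2)).card = m + e := by
    have hsplit : (Finset.univ.filter (fun H : Finset (Fin n) => g H ≤ T/2))
        = (Finset.univ.filter (fun H : Finset (Fin n) => g H < T/2))
          ∪ (Finset.univ.filter (fun H : Finset (Fin n) => g H = T/2)) := by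
      rw [← Finset.filter_or]
      exact Finset.filter_congr (fun H _ => le_iff_lt_or_eq)
    have hdisj : Disjoint (Finset.univ.filter (fun H : Finset (Fin n) => g H < T/2))
        (Finset.univ.filter (fun H : Finset (Fin n) => g H = T/2)) := by
      rw [Finset.disjoint_filter]
      intro H _ h1 h2
      linarith [h2.le]
    rw [hsplit, Finset.card_union_of_disjoint hdisj]
  have htotal : m + e + m = 2 ^ n := by
    have h1 := Finset.card_filter_add_card_filter_not
      (s := (Finset.univ : Finset (Finset (Fin n)))) (p := fun H => g H ≤ T/2)
    have h2 : (Finset.univ.filter (fun H : Finset (Fin n) => ¬ g H ≤ T/2))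
        = (Finset.univ.filter (fun H : Finset (Fin n) => T/2 < g H)) :=
      Finset.filter_congr (fun H _ => by simp [not_le])
    have h3 : (Finset.univ : Finset (Finset (Fin n))).card = 2 ^ n := by
      simpa using Fintype.card_finset (α := Fin n)
    rw [hle_card, h2, hcompl, h3] at h1
    omega
  have h2n : 2 ^ (n-1) + 2 ^ (n-1) = 2 ^ n := by
    have hsub : 2 ^ n = 2 ^ (n-1) * 2 := by
      rw [← pow_succ]; congr 1; omega
    omega
  have key : ∀ (i : ℕ) (hi : i < L.length), (L[i] = T/2 ↔ (m ≤ i ∧ i < m + e)) := by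
    intro i hi
    have klt := sorted_getElem_iff L hL (fun y => y < T/2)
      (fun y z hyz h => lt_of_le_of_lt hyz h) i hi
    have kle := sorted_getElem_iff L hL (fun y => y ≤ T/2)
      (fun y z hyz h => le_trans hyz h) i hi
    rw [hcount] at klt kle
    rw [← hm] at klt
    rw [hle_card] at kle
    constructor
    · intro h
      refine ⟨?_, kle.mp h.le⟩
      by_contra hmi
      push_neg at hmi
      have := klt.mpr hmi
      rw [h] at this
      exact lt_irrefl _ this
    · rintro ⟨h1, h2⟩
      have hle' : L[i] ≤ T/2 := kle.mpr h2
      have hnlt : ¬ L[i] < T/2 := fun h => absurd (klt.mp h) (by omega)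
      linarith [lt_or_eq_of_le hle']
      <;> skip
  constructor
  · rintro ⟨S, hS⟩
    have hSr : g S = g Sᶜ := by
      rw [hg]
      have hcast := congrArg (fun x : ℕ => (x : ℝ)) hS
      push_cast at hcast
      exact hcast
    have hgS : g S = T/2 := by have := part2 S; linarith
    have hgSc : g Sᶜ = T/2 := by linarith
    have hne : S ≠ Sᶜ := by
      intro hEq
      obtain ⟨j⟩ := Fin.pos_iff_nonempty.mp (by omega : 0 < n)
      by_cases hj : j ∈ S
      · have : j ∈ Sᶜ := hEq ▸ hj
        exact (Finset.mem_compl.mp this) hj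
      · have : j ∈ Sᶜ := Finset.mem_compl.mpr hj
        rw [← hEq] at this
        exact hj this
    have he2 : 2 ≤ e := by
      rw [he]
      exact Finset.one_lt_card.mpr
        ⟨S, Finset.mem_filter.mpr ⟨Finset.mem_univ _, hgS⟩,
         Sᶜ, Finset.mem_filter.mpr ⟨Finset.mem_univ _, hgSc⟩, hne⟩
    have hgoal : ∀ i : ℕ, m ≤ i → i < m + e → L[i]? = some (T/2) := by
      intro i h1 h2
      have hi : i < L.length := by rw [hlen]; omega
      rw [List.getElem?_eq_some_iff]
      exact ⟨hi, (key i hi).mpr ⟨h1, h2⟩⟩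
    constructor
    · exact hgoal _ (by omega) (by omega)
    · exact hgoal _ (by omega) (by omega)
  · rintro ⟨h1, _⟩
    rw [List.getElem?_eq_some_iff] at h1
    obtain ⟨hi, hEq⟩ := h1
    have hmem : T/2 ∈ L := hEq ▸ List.getElem_mem hi
    rw [hLdef, Multiset.mem_sort, hM, Multiset.mem_map] at hmem
    obtain ⟨S, _, hgS⟩ := hmem
    have hgSc : g Sᶜ = T/2 := by have := part2 S; linarith
    refine ⟨S, ?_⟩
    have : (∑ j ∈ S, (a j : ℝ)) = ∑ j ∈ Sᶜ, (a j : ℝ) := by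
      rw [hg] at hgS hgSc
      simp only at hgS hgSc
      rw [hgS, hgSc]
    exact_mod_cast this
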